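/- (Varshamov–Gilbert bound) Let M ≥ 8 be an integer. Then there exists a subset Θ = {θ^(0), θ^(1), …, θ^(N)} of {0,1}^M such that θ^(0) = (0, …, 0), the Hamming distance satisfies H(θ, θ') > M/8 for all θ ≠ θ' in Θ, and N ≥ 2^{M/8}; in particular the cardinality of Θ is at least 2^{M/8} + 1. -/

import Mathlib

open Finset

private lemma vg_step_ineq (n : ℕ) : (n + 2)^(n+1) ≤ 4 * (n+1)^(n+1) := by
  have h : ((n:ℝ) + 2)^(n+1) ≤ 4 * ((n:ℝ)+1)^(n+1) := by
    have hn : (0:ℝ) < (n:ℝ) + 1 := by positivity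
    have h1 : (n:ℝ) + 2 = ((n:ℝ)+1) * (1 + 1/((n:ℝ)+1)) := by field_simp; ring
    have h2 : (1 + 1/((n:ℝ)+1)) ≤ Real.exp (1/((n:ℝ)+1)) := by
      have := Real.add_one_le_exp (1/((n:ℝ)+1)); linarith
    have h3 : (1 + 1/((n:ℝ)+1))^(n+1) ≤ Real.exp (1/((n:ℝ)+1)) ^ (n+1) := by
      apply pow_le_pow_left₀ (by positivity) h2
    have h4 : Real.exp (1/((n:ℝ)+1)) ^ (n+1) = Real.exp 1 := by
      rw [← Real.exp_nat_mul]
      congr 1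
      field_simp
      push_cast
      ring
    have h5 : Real.exp 1 ≤ 4 := by
      have := Real.exp_one_lt_d9; linarith
    calc ((n:ℝ) + 2)^(n+1) = ((n:ℝ)+1)^(n+1) * (1 + 1/((n:ℝ)+1))^(n+1) := by
          rw [h1, mul_pow]
      _ ≤ ((n:ℝ)+1)^(n+1) * 4 := by
          apply mul_le_mul_of_nonneg_left _ (by positivity)
          rw [← h4] at h5; exact h3.trans h5
      _ = 4 * ((n:ℝ)+1)^(n+1) := by ring
  exact_mod_cast h

private lemma vg_lemA (m : ℕ) : (m+1)^m ≤ 4^m * m.factorial := by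
  induction m with
  | zero => simp
  | succ n ih =>
      calc (n+2)^(n+1) ≤ 4 * (n+1)^(n+1) := vg_step_ineq n
        _ = 4 * ((n+1) * (n+1)^n) := by ring
        _ ≤ 4 * ((n+1) * (4^n * n.factorial)) := by
            apply Nat.mul_le_mul_left
            apply Nat.mul_le_mul_left _ ih
        _ = 4^(n+1) * (n+1).factorial := by
            rw [Nat.factorial_succ]; ring

private lemma vg_lemB (m : ℕ) (hm : 1 ≤ m) : 2*(m+1) ≤ 4^m := by
  induction m, hm using Nat.le_induction with
  | base => norm_num
  | succ n hn ih =>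
      have h4 : (4:ℕ)^(n+1) = 4*4^n := by ring
      omega

private lemma vg_chooseMono (M : ℕ) : ∀ m, ∀ j ≤ m, m ≤ M/2 → M.choose j ≤ M.choose m := by
  intro m
  induction m with
  | zero => intro j hj _; simp_all
  | succ n ih =>
      intro j hj hm
      rcases Nat.eq_or_lt_of_le hj with h | h
      · subst h; rfl
      · exact (ih j (by omega) (by omega)).trans
          (Nat.choose_le_succ_of_lt_half_left (by omega))

private lemma vg_chooseBound (M m : ℕ) (h : M ≤ 8*(m+1)) : M.choose m ≤ 32^m := by
  have h1 : m.factorial * M.choose m ≤ m.factorial * 32^m := by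
    calc m.factorial * M.choose m = M.descFactorial m := by
          rw [Nat.descFactorial_eq_factorial_mul_choose]
      _ ≤ M^m := Nat.descFactorial_le_pow M m
      _ ≤ (8*(m+1))^m := Nat.pow_le_pow_left h m
      _ = 8^m * (m+1)^m := by rw [mul_pow]
      _ ≤ 8^m * (4^m * m.factorial) := Nat.mul_le_mul_left _ (vg_lemA m)
      _ = m.factorial * 32^m := by rw [show (32:ℕ) = 8*4 by norm_num, mul_pow]; ring
  exact Nat.le_of_mul_le_mul_left h1 m.factorial_pos

private lemma vg_keyNum (M : ℕ) (hM : 8 ≤ M) :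
    (2^((M+7)/8) + 1) * ∑ j ∈ range (M/8 + 1), M.choose j ≤ 2^M := by
  set m := M/8 with hm
  set k := (M+7)/8 with hk
  have hm1 : 1 ≤ m := by omega
  have hsum : ∑ j ∈ range (m + 1), M.choose j ≤ (m+1) * M.choose m := by
    calc ∑ j ∈ range (m + 1), M.choose j ≤ ∑ j ∈ range (m + 1), M.choose m := by
          apply Finset.sum_le_sum
          intro j hj
          exact vg_chooseMono M m j (by simp at hj; omega) (by omega)
      _ = (m+1) * M.choose m := by simp [mul_comm]
  have hcb : M.choose m ≤ 32^m := vg_chooseBound M m (by omega)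
  have hA : (2^k + 1) * ∑ j ∈ range (m + 1), M.choose j ≤ 2^(k+1) * ((m+1) * 32^m) := by
    apply Nat.mul_le_mul
    · have : (1:ℕ) ≤ 2^k := Nat.one_le_two_pow
      have h2 : (2:ℕ)^(k+1) = 2^k + 2^k := by ring
      omega
    · exact hsum.trans (Nat.mul_le_mul_left _ hcb)
  have hB : 2 * (2^(k+1) * ((m+1) * 32^m)) ≤ 2 * 2^M := by
    calc 2 * (2^(k+1) * ((m+1) * 32^m)) = 2^(k+1) * ((2*(m+1)) * 32^m) := by ring
      _ ≤ 2^(k+1) * (4^m * 32^m) := by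
          apply Nat.mul_le_mul_left
          exact Nat.mul_le_mul_right _ (vg_lemB m hm1)
      _ = 2^(k+1+(2*m+5*m)) := by
          rw [show (4:ℕ) = 2^2 by norm_num, show (32:ℕ) = 2^5 by norm_num,
            ← pow_mul, ← pow_mul, ← pow_add, ← pow_add]
      _ ≤ 2^(M+1) := Nat.pow_le_pow_right (by norm_num) (by omega)
      _ = 2 * 2^M := by ring
  omega

private lemma vg_ballCard (M m : ℕ) (c : Fin M → Bool) :
    #{y : Fin M → Bool | hammingDist y c ≤ m} ≤ ∑ j ∈ range (m+1), M.choose j := by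
  classical
  have hcard : ∀ y : Fin M → Bool, #{i | y i ≠ c i} = hammingDist y c := fun y => rfl
  have := Finset.card_le_card_of_injOn
    (f := fun y : Fin M → Bool => ({i | y i ≠ c i} : Finset (Fin M)))
    (s := ({y : Fin M → Bool | hammingDist y c ≤ m} : Finset _))
    (t := (range (m+1)).biUnion (fun j => Finset.powersetCard j univ))
    (by
      intro y hy
      simp only [Finset.coe_filter, Finset.mem_coe, Finset.mem_filter, Finset.mem_univ, true_and, Set.mem_setOf_eq] at hy
      simp only [Finset.mem_coe, Finset.mem_biUnion, Finset.mem_range, Finset.mem_powersetCard]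
      exact ⟨hammingDist y c, by omega, Finset.subset_univ _, hcard y⟩)
    (by
      intro y hy y' hy' hf
      funext i
      simp only at hf
      have : (i ∈ ({j | y j ≠ c j} : Finset (Fin M))) ↔ (i ∈ ({j | y' j ≠ c j} : Finset (Fin M))) := by
        rw [hf]
      simp only [Finset.mem_filter, Finset.mem_univ, true_and] at this
      cases hci : c i <;> cases hyi : y i <;> cases hyi' : y' i <;> simp_all)
  refine this.trans ?_
  refine (Finset.card_biUnion_le).trans ?_
  apply Finset.sum_le_sum
  intro j hj
  rw [Finset.card_powersetCard, Finset.card_univ, Fintype.card_fin]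

/-- Varshamov–Gilbert bound: for every integer `M ≥ 8` there exist
`N` with `N ≥ 2^{M/8}` and distinct elements `θ^(0), …, θ^(N)` of `{0,1}^M` with
`θ^(0) = (0,…,0)` and pairwise Hamming distance `> M/8`; in particular the set
`{θ^(0), …, θ^(N)}` has cardinality at least `2^{M/8} + 1`. -/
theorem stmt_8 (M : ℕ) (hM : 8 ≤ M) :
    ∃ (N : ℕ) (θ : Fin (N + 1) → (Fin M → Bool)),
      θ 0 = (fun _ => false) ∧
      Function.Injective θ ∧
      (∀ i j : Fin (N + 1), i ≠ j →
        (M : ℝ) / 8 < (hammingDist (θ i) (θ j) : ℝ)) ∧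
      (2 : ℝ) ^ ((M : ℝ) / 8) ≤ (N : ℝ) := by
  classical
  set zero : Fin M → Bool := fun _ => false with hzero
  set P : Finset (Fin M → Bool) → Prop := fun S =>
    zero ∈ S ∧ ∀ x ∈ S, ∀ y ∈ S, x ≠ y → M < 8 * hammingDist x y with hPdef
  have h0 : P {zero} := by
    constructor
    · exact Finset.mem_singleton_self zero
    · intro x hx y hy hxy
      simp only [Finset.mem_singleton] at hx hy
      exact absurd (hx.trans hy.symm) hxy
  set T : Finset (Finset (Fin M → Bool)) := {S | P S} with hTdef
  have hTne : T.Nonempty := ⟨{zero}, Finset.mem_filter.mpr ⟨Finset.mem_univ _, h0⟩⟩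
  obtain ⟨S, hST, hSmax⟩ := T.exists_max_image Finset.card hTne
  have hPS : P S := (Finset.mem_filter.mp hST).2
  -- covering property of a maximal code
  have hcover : ∀ v : Fin M → Bool, ∃ c ∈ S, 8 * hammingDist v c ≤ M := by
    intro v
    by_contra hcon
    push_neg at hcon
    have hvS : v ∉ S := by
      intro hv
      have := hcon v hv
      simp [hammingDist_self] at this
    have hins : P (insert v S) := by
      refine ⟨Finset.mem_insert_of_mem hPS.1, ?_⟩
      intro x hx y hy hxy
      rcases Finset.mem_insert.mp hx with rfl | hx'
      · rcases Finset.mem_insert.mp hy with rfl | hy'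
        · exact absurd rfl hxy
        · exact hcon y hy'
      · rcases Finset.mem_insert.mp hy with rfl | hy'
        · rw [hammingDist_comm]; exact hcon x hx'
        · exact hPS.2 x hx' y hy' hxy
    have hle := hSmax (insert v S) (Finset.mem_filter.mpr ⟨Finset.mem_univ _, hins⟩)
    rw [Finset.card_insert_of_notMem hvS] at hle
    omega
  -- counting
  set m := M/8 with hm
  set k := (M+7)/8 with hk
  have hcount : 2^M ≤ S.card * ∑ j ∈ range (m+1), M.choose j := by
    have hsub : (univ : Finset (Fin M → Bool)) ⊆
        S.biUnion (fun c => {y : Fin M → Bool | hammingDist y c ≤ m}) := by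
      intro v _
      obtain ⟨c, hc, hvc⟩ := hcover v
      simp only [Finset.mem_biUnion]
      refine ⟨c, hc, ?_⟩
      simp only [Finset.mem_filter, Finset.mem_univ, true_and]
      omega
    calc 2^M = (univ : Finset (Fin M → Bool)).card := by
          simp [Finset.card_univ]
      _ ≤ (S.biUnion (fun c => {y : Fin M → Bool | hammingDist y c ≤ m})).card :=
          Finset.card_le_card hsub
      _ ≤ ∑ c ∈ S, #{y : Fin M → Bool | hammingDist y c ≤ m} := Finset.card_biUnion_le
      _ ≤ ∑ _c ∈ S, ∑ j ∈ range (m+1), M.choose j :=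
          Finset.sum_le_sum fun c _ => vg_ballCard M m c
      _ = S.card * ∑ j ∈ range (m+1), M.choose j := by
          rw [Finset.sum_const, smul_eq_mul]
  have hV : 0 < ∑ j ∈ range (m+1), M.choose j := by
    apply Finset.sum_pos'
    · intro i _; exact Nat.zero_le _
    · exact ⟨0, by simp, by simp [Nat.choose_pos (by omega : (0:ℕ) ≤ M)]⟩
  have hScard : 2^k + 1 ≤ S.card := by
    by_contra hc
    push_neg at hc
    have hle : S.card ≤ 2^k := by omega
    have h1 : S.card * ∑ j ∈ range (m+1), M.choose j ≤
        2^k * ∑ j ∈ range (m+1), M.choose j :=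
      Nat.mul_le_mul hle le_rfl
    have h2 := vg_keyNum M hM
    rw [← hm, ← hk] at h2
    nlinarith [hcount, h1, h2, hV]
  -- build the enumeration
  obtain ⟨N, hN⟩ : ∃ N, S.card = N + 1 := ⟨S.card - 1, by have h := Finset.card_pos.mpr ⟨zero, hPS.1⟩; omega⟩
  set S' := S.erase zero with hS'
  have hS'card : S'.card = N := by
    rw [hS', Finset.card_erase_of_mem hPS.1, hN]
    omega
  have e : {x // x ∈ S'} ≃ Fin N := S'.equivFin.trans (finCongr hS'card)
  set θ : Fin (N+1) → (Fin M → Bool) :=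
    Fin.cons zero (fun i => (e.symm i : Fin M → Bool)) with hθ
  have hθ0 : θ 0 = zero := rfl
  have hθS : ∀ i, θ i ∈ S := by
    intro i
    induction i using Fin.cases with
    | zero => exact hPS.1
    | succ i =>
        have h1 : (e.symm i : Fin M → Bool) ∈ S' := (e.symm i).2
        have h2 : θ i.succ = (e.symm i : Fin M → Bool) := by rw [hθ]; simp
        rw [h2]
        exact Finset.mem_of_mem_erase h1
  have hθinj : Function.Injective θ := by
    intro i j hij
    induction i using Fin.cases with
    | zero =>
        induction j using Fin.cases with
        | zero => rfl
        | succ j =>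
            exfalso
            have hj : (e.symm j : Fin M → Bool) ∈ S' := (e.symm j).2
            rw [hθ] at hij
            simp only [Fin.cons_zero, Fin.cons_succ] at hij
            rw [← hij] at hj
            exact Finset.notMem_erase zero S hj
    | succ i =>
        induction j using Fin.cases with
        | zero =>
            exfalso
            have hi : (e.symm i : Fin M → Bool) ∈ S' := (e.symm i).2
            rw [hθ] at hij
            simp only [Fin.cons_zero, Fin.cons_succ] at hij
            rw [hij] at hi
            exact Finset.notMem_erase zero S hi
        | succ j =>
            rw [hθ] at hij
            simp only [Fin.cons_succ] at hij
            have : e.symm i = e.symm j := Subtype.ext hij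
            have := e.symm.injective this
            rw [this]
  refine ⟨N, θ, hθ0, hθinj, ?_, ?_⟩
  · intro i j hij
    have hne : θ i ≠ θ j := fun h => hij (hθinj h)
    have := hPS.2 (θ i) (hθS i) (θ j) (hθS j) hne
    rw [div_lt_iff₀ (by norm_num : (0:ℝ) < 8)]
    have : (M:ℝ) < 8 * (hammingDist (θ i) (θ j) : ℝ) := by exact_mod_cast this
    linarith
  · have hNk : 2^k ≤ N := by omega
    have hMk : (M:ℝ)/8 ≤ (k:ℝ) := by
      rw [div_le_iff₀ (by norm_num : (0:ℝ) < 8)]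
      have : M ≤ 8 * k := by omega
      exact_mod_cast le_of_le_of_eq (Nat.cast_le.mpr this) (by push_cast; ring)
    calc (2:ℝ) ^ ((M:ℝ)/8) ≤ (2:ℝ) ^ ((k:ℝ)) :=
          Real.rpow_le_rpow_of_exponent_le one_le_two hMk
      _ = ((2^k : ℕ) : ℝ) := by rw [Real.rpow_natCast]; push_cast; ring
      _ ≤ (N:ℝ) := by exact_mod_cast hNk
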